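/- Strong contextuality of the GHZ–Mermin model: let ghz = (e₀⊗e₀⊗e₀ + e₁⊗e₁⊗e₁)/√2 in EuclideanSpace ℂ (Fin 2 × Fin 2 × Fin 2), and for a ∈ {0,1} let vX(a) = (e₀ + (−1)^a e₁)/√2 and vY(a) = (e₀ + (−1)^a·i·e₁)/√2. Then for every assignment of outcomes x_A, x_B, x_C, y_A, y_B, y_C ∈ {0,1} to the six measurements, at least one of the four inner products ⟪vX(x_A)⊗vX(x_B)⊗vX(x_C), ghz⟫, ⟪vX(x_A)⊗vY(y_B)⊗vY(y_C), ghz⟫, ⟪vY(y_A)⊗vX(x_B)⊗vY(y_C), ghz⟫, ⟪vY(y_A)⊗vY(y_B)⊗vX(x_C), ghz⟫ is zero. -/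

import Mathlib

open scoped InnerProductSpace

noncomputable section

/-- Standard basis vectors `e₀, e₁` of `ℂ²`. -/
def e (a : Fin 2) : EuclideanSpace ℂ (Fin 2) := EuclideanSpace.single a 1

/-- Threefold product vector: `(φ⊗χ⊗ξ)(j,k,l) = φ(j)·χ(k)·ξ(l)`. -/
def tp3 (φ χ ξ : EuclideanSpace ℂ (Fin 2)) :
    EuclideanSpace ℂ (Fin 2 × Fin 2 × Fin 2) :=
  WithLp.toLp 2 (fun p => φ p.1 * χ p.2.1 * ξ p.2.2)

/-- The GHZ state `(e₀⊗e₀⊗e₀ + e₁⊗e₁⊗e₁)/√2`. -/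
def ghz : EuclideanSpace ℂ (Fin 2 × Fin 2 × Fin 2) :=
  (Real.sqrt 2 : ℂ)⁻¹ • (tp3 (e 0) (e 0) (e 0) + tp3 (e 1) (e 1) (e 1))

/-- X-basis vectors `vX(a) = (e₀ + (−1)^a e₁)/√2`. -/
def vX (a : Fin 2) : EuclideanSpace ℂ (Fin 2) :=
  (Real.sqrt 2 : ℂ)⁻¹ • (e 0 + ((-1 : ℂ) ^ (a : ℕ)) • e 1)

/-- Y-basis vectors `vY(a) = (e₀ + (−1)^a·i·e₁)/√2`. -/
def vY (a : Fin 2) : EuclideanSpace ℂ (Fin 2) :=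
  (Real.sqrt 2 : ℂ)⁻¹ • (e 0 + (((-1 : ℂ) ^ (a : ℕ)) * Complex.I) • e 1)


lemma amp (φ χ ξ : EuclideanSpace ℂ (Fin 2)) :
    ⟪tp3 φ χ ξ, ghz⟫_ℂ = (Real.sqrt 2 : ℂ)⁻¹ *
      (starRingEnd ℂ (φ 0) * starRingEnd ℂ (χ 0) * starRingEnd ℂ (ξ 0)
        + starRingEnd ℂ (φ 1) * starRingEnd ℂ (χ 1) * starRingEnd ℂ (ξ 1)) := by
  simp [ghz, tp3, e, PiLp.inner_apply, Fintype.sum_prod_type, Fin.sum_univ_two,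
    EuclideanSpace.single_apply, mul_comm, mul_assoc, mul_left_comm]
  ring

lemma vX0 (a : Fin 2) : vX a 0 = (Real.sqrt 2 : ℂ)⁻¹ := by
  simp [vX, e, EuclideanSpace.single_apply]
lemma vX1 (a : Fin 2) : vX a 1 = (Real.sqrt 2 : ℂ)⁻¹ * (-1 : ℂ) ^ (a : ℕ) := by
  simp [vX, e, EuclideanSpace.single_apply]
lemma vY0 (a : Fin 2) : vY a 0 = (Real.sqrt 2 : ℂ)⁻¹ := by
  simp [vY, e, EuclideanSpace.single_apply]
lemma vY1 (a : Fin 2) : vY a 1 = (Real.sqrt 2 : ℂ)⁻¹ * ((-1 : ℂ) ^ (a : ℕ) * Complex.I) := by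
  simp [vY, e, EuclideanSpace.single_apply]

lemma ampXXX (a b c : Fin 2) :
    ⟪tp3 (vX a) (vX b) (vX c), ghz⟫_ℂ =
      ((Real.sqrt 2 : ℂ)⁻¹) ^ 4 * (1 + (-1 : ℂ) ^ ((a : ℕ) + b + c)) := by
  rw [amp, vX0, vX0, vX0, vX1, vX1, vX1]
  simp only [map_mul, map_pow, map_inv₀, map_neg, map_one, Complex.conj_ofReal]
  ring

lemma ampXYY (a b c : Fin 2) :
    ⟪tp3 (vX a) (vY b) (vY c), ghz⟫_ℂ =
      ((Real.sqrt 2 : ℂ)⁻¹) ^ 4 * (1 - (-1 : ℂ) ^ ((a : ℕ) + b + c)) := by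
  rw [amp, vX0, vY0, vY0, vX1, vY1, vY1]
  simp only [map_mul, map_pow, map_inv₀, map_neg, map_one, Complex.conj_ofReal,
    Complex.conj_I]
  ring_nf
  rw [Complex.I_sq]
  ring

lemma ampYXY (a b c : Fin 2) :
    ⟪tp3 (vY a) (vX b) (vY c), ghz⟫_ℂ =
      ((Real.sqrt 2 : ℂ)⁻¹) ^ 4 * (1 - (-1 : ℂ) ^ ((a : ℕ) + b + c)) := by
  rw [amp, vY0, vX0, vY0, vY1, vX1, vY1]
  simp only [map_mul, map_pow, map_inv₀, map_neg, map_one, Complex.conj_ofReal,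
    Complex.conj_I]
  ring_nf
  rw [Complex.I_sq]
  ring

lemma ampYYX (a b c : Fin 2) :
    ⟪tp3 (vY a) (vY b) (vX c), ghz⟫_ℂ =
      ((Real.sqrt 2 : ℂ)⁻¹) ^ 4 * (1 - (-1 : ℂ) ^ ((a : ℕ) + b + c)) := by
  rw [amp, vY0, vY0, vX0, vY1, vY1, vX1]
  simp only [map_mul, map_pow, map_inv₀, map_neg, map_one, Complex.conj_ofReal,
    Complex.conj_I]
  ring_nf
  rw [Complex.I_sq]
  ring

/-- Strong contextuality of the GHZ–Mermin model: every global assignment of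
outcomes to the six measurements `X_A, Y_A, X_B, Y_B, X_C, Y_C` restricts to an
impossible (zero-amplitude) event in at least one of the four measurement
contexts `XXX`, `XYY`, `YXY`, `YYX`. -/
theorem ghz_mermin_strong_contextuality (xA xB xC yA yB yC : Fin 2) :
    ⟪tp3 (vX xA) (vX xB) (vX xC), ghz⟫_ℂ = 0 ∨
    ⟪tp3 (vX xA) (vY yB) (vY yC), ghz⟫_ℂ = 0 ∨
    ⟪tp3 (vY yA) (vX xB) (vY yC), ghz⟫_ℂ = 0 ∨
    ⟪tp3 (vY yA) (vY yB) (vX xC), ghz⟫_ℂ = 0 := by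
  rw [ampXXX, ampXYY, ampYXY, ampYYX]
  fin_cases xA <;> fin_cases xB <;> fin_cases xC <;> fin_cases yA <;>
    fin_cases yB <;> fin_cases yC <;> norm_num
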